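/- Let φ = (1+√5)/2 and D = log₂φ, p = 2π/log 2. The complex solutions of 2^{-ω} + 2^{-2ω} = 1 are exactly ω = D + inp for n ∈ ℤ, together with ω = −D − ip/2 + inp for n ∈ ℤ. -/
import Mathlib


/-- The complex solutions of `2^{-ω} + 2^{-2ω} = 1` are exactly
`ω = D + inp` and `ω = -D - ip/2 + inp`, `n ∈ ℤ`, with `D = log₂ φ`,
`p = 2π/log 2`. -/
theorem stmt_14 (φ D p : ℝ) (hφ : φ = (1 + Real.sqrt 5) / 2)
    (hD : D = Real.logb 2 φ) (hp : p = 2 * Real.pi / Real.log 2) :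
    ∀ ω : ℂ, (2 : ℂ) ^ (-ω) + (2 : ℂ) ^ (-2 * ω) = 1 ↔
      ((∃ n : ℤ, ω = (D : ℂ) + n * p * Complex.I) ∨
       (∃ n : ℤ, ω = -(D : ℂ) - (p / 2 : ℝ) * Complex.I + n * p * Complex.I)) := by
  intro ω
  have h5 : (1:ℝ) < Real.sqrt 5 := by
    have h1 : (1:ℝ) = Real.sqrt 1 := Real.sqrt_one.symm
    rw [h1]
    exact Real.sqrt_lt_sqrt (by norm_num) (by norm_num)
  have hsq5 : Real.sqrt 5 ^ 2 = 5 := Real.sq_sqrt (by norm_num)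
  have hφ0 : 0 < φ := by rw [hφ]; linarith
  have hlg : 0 < Real.log 2 := Real.log_pos (by norm_num)
  have hlgC : (Real.log 2 : ℂ) ≠ 0 := by exact_mod_cast hlg.ne'
  have hlog2 : Complex.log 2 = (Real.log 2 : ℂ) := by
    rw [show (2:ℂ) = ((2:ℝ):ℂ) by norm_num, ← Complex.ofReal_log (by norm_num : (0:ℝ) ≤ 2)]
  have hcpow : ∀ w : ℂ, (2:ℂ) ^ w = Complex.exp (w * (Real.log 2 : ℂ)) := by
    intro w
    rw [Complex.cpow_def_of_ne_zero (by norm_num), hlog2, mul_comm]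
  have hDr : D * Real.log 2 = Real.log φ := by
    rw [hD, Real.logb]; field_simp
  have hD' : (D:ℂ) * (Real.log 2 : ℂ) = (Real.log φ : ℂ) := by exact_mod_cast hDr
  have hpr : p * Real.log 2 = 2 * Real.pi := by
    rw [hp]; field_simp
  have hp' : (p:ℂ) * (Real.log 2 : ℂ) = 2 * (Real.pi : ℂ) := by exact_mod_cast hpr
  set u : ℂ := Complex.exp (-ω * (Real.log 2 : ℂ)) with hu
  have hsq : (2:ℂ) ^ (-2 * ω) = u ^ 2 := by
    rw [hcpow, hu, ← Complex.exp_nat_mul]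
    congr 1
    ring
  -- the two roots
  set a : ℝ := (Real.sqrt 5 - 1) / 2 with ha
  have ha0 : 0 < a := by rw [ha]; linarith
  have haφ : a = φ⁻¹ := by
    refine eq_inv_of_mul_eq_one_right ?_
    rw [ha, hφ]
    nlinarith [hsq5]
  have hroots : (2 : ℂ) ^ (-ω) + (2 : ℂ) ^ (-2 * ω) = 1 ↔
      (u = (a:ℂ) ∨ u = -(φ:ℂ)) := by
    rw [hcpow (-ω), hsq, ← hu]
    constructor
    · intro h
      have hfac : (u - (a:ℂ)) * (u - (-(φ:ℂ))) = 0 := by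
        have haC : ((a:ℝ):ℂ) = ((Real.sqrt 5 : ℝ):ℂ) / 2 - 1/2 := by
          rw [ha]; push_cast; ring
        have hφC : ((φ:ℝ):ℂ) = 1/2 + ((Real.sqrt 5 : ℝ):ℂ) / 2 := by
          rw [hφ]; push_cast; ring
        have h5C : ((Real.sqrt 5 : ℝ):ℂ) ^ 2 = 5 := by
          exact_mod_cast congrArg (fun x : ℝ => (x : ℂ)) hsq5
        rw [haC, hφC]
        linear_combination h - (1/4 : ℂ) * h5C
      rcases mul_eq_zero.mp hfac with h' | h'
      · exact Or.inl (sub_eq_zero.mp h')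
      · exact Or.inr (sub_eq_zero.mp h')
    · rintro (h | h) <;> rw [h]
      · have : ((a:ℂ)) + (a:ℂ)^2 = 1 := by
          have h5C : ((Real.sqrt 5 : ℝ):ℂ) ^ 2 = 5 := by
            exact_mod_cast congrArg (fun x : ℝ => (x : ℂ)) hsq5
          rw [ha]; push_cast
          linear_combination (1/4 : ℂ) * h5C
        exact this
      · have h5C : ((Real.sqrt 5 : ℝ):ℂ) ^ 2 = 5 := by
          exact_mod_cast congrArg (fun x : ℝ => (x : ℂ)) hsq5
        rw [hφ]; push_cast
        linear_combination (1/4 : ℂ) * h5C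
  rw [hroots]
  have hexpa : (a : ℂ) = Complex.exp (-(Real.log φ : ℂ)) := by
    rw [haφ, show (-(Real.log φ:ℂ)) = ((-Real.log φ : ℝ):ℂ) by push_cast; ring,
      ← Complex.ofReal_exp, Real.exp_neg, Real.exp_log hφ0]
  have hexpb : -(φ:ℂ) = Complex.exp ((Real.log φ : ℂ) + Real.pi * Complex.I) := by
    rw [Complex.exp_add, Complex.exp_pi_mul_I,
      show (Real.log φ : ℂ) = ((Real.log φ : ℝ):ℂ) from rfl, ← Complex.ofReal_exp,
      Real.exp_log hφ0]
    ring
  constructor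
  · rintro (h | h)
    · left
      rw [hexpa, hu, Complex.exp_eq_exp_iff_exists_int] at h
      obtain ⟨n, hn⟩ := h
      refine ⟨-n, mul_right_cancel₀ hlgC ?_⟩
      push_cast
      linear_combination -hn - hD' + (n:ℂ) * Complex.I * hp'
    · right
      rw [hexpb, hu, Complex.exp_eq_exp_iff_exists_int] at h
      obtain ⟨n, hn⟩ := h
      refine ⟨-n, mul_right_cancel₀ hlgC ?_⟩
      push_cast
      linear_combination -hn + hD' + ((1/2 : ℂ) + n) * Complex.I * hp'
  · rintro (⟨n, hn⟩ | ⟨n, hn⟩)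
    · left
      rw [hexpa, hu, Complex.exp_eq_exp_iff_exists_int]
      refine ⟨-n, ?_⟩
      rw [hn]
      push_cast
      linear_combination -hD' - (n:ℂ) * Complex.I * hp'
    · right
      rw [hexpb, hu, Complex.exp_eq_exp_iff_exists_int]
      refine ⟨-n, ?_⟩
      rw [hn]
      push_cast
      linear_combination hD' + ((1/2 : ℂ) - n) * Complex.I * hp'
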